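/- For any finite simple graph G and positive integers b and λ, the number of legal b-fold λ-colorings of G equals the number of legal proper (1-fold) λ-colorings of the blow-up graph G^b divided by (b!)^{|V(G)|}. -/

import Mathlib

/-- The `b`-fold blow-up of a graph `G`: each vertex is replaced by a clique of size `b`,
and each edge by a complete join. -/
def blowup {V : Type*} (G : SimpleGraph V) (b : ℕ) : SimpleGraph (V × Fin b) where
  Adj x y := (x.1 = y.1 ∧ x.2 ≠ y.2) ∨ G.Adj x.1 y.1
  symm := by
    constructor
    rintro ⟨u, i⟩ ⟨v, j⟩ (⟨rfl, h⟩ | h)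
    · exact Or.inl ⟨rfl, h.symm⟩
    · exact Or.inr h.symm
  loopless := by
    constructor
    rintro ⟨u, i⟩ (⟨-, h⟩ | h)
    · exact h rfl
    · exact G.irrefl h

/-- `f` is a legal `b`-fold `lam`-coloring of `G`. -/
def IsBFoldColoring {V : Type*} (G : SimpleGraph V) (b lam : ℕ)
    (f : V → Finset (Fin lam)) : Prop :=
  (∀ v, (f v).card = b) ∧ ∀ ⦃u v⦄, G.Adj u v → Disjoint (f u) (f v)

/-- The number of legal `b`-fold `lam`-colorings of `G`. -/
noncomputable def nBFold {V : Type*} (G : SimpleGraph V) (b lam : ℕ) : ℕ :=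
  Nat.card {f : V → Finset (Fin lam) // IsBFoldColoring G b lam f}

/-- The number of proper (1-fold) `lam`-colorings of `G`. -/
noncomputable def nProper {V : Type*} (G : SimpleGraph V) (lam : ℕ) : ℕ :=
  Nat.card (G.Coloring (Fin lam))

section Aux

open Finset

variable {V : Type*} (G : SimpleGraph V) (b lam : ℕ)

/-- Families of embeddings with disjoint images along edges. -/
abbrev EmbFam (G : SimpleGraph V) (b lam : ℕ) : Type _ :=
  {g : V → (Fin b ↪ Fin lam) // ∀ ⦃u v⦄, G.Adj u v →
    Disjoint (Finset.image (g u) Finset.univ) (Finset.image (g v) Finset.univ)}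

/-- Colorings of the blow-up correspond to families of embeddings. -/
def colEquiv : (blowup G b).Coloring (Fin lam) ≃ EmbFam G b lam where
  toFun c := ⟨fun v => ⟨fun i => c (v, i), fun i j h => by
      by_contra hij
      have hadj : (blowup G b).Adj (v, i) (v, j) := Or.inl ⟨rfl, hij⟩
      exact c.valid hadj h⟩, by
    intro u v huv
    rw [Finset.disjoint_left]
    rintro x hx hx'
    simp only [Finset.mem_image, Finset.mem_univ, true_and,
      Function.Embedding.coeFn_mk] at hx hx'
    obtain ⟨i, hi⟩ := hx
    obtain ⟨j, hj⟩ := hx'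
    exact c.valid (Or.inr huv) (hi.trans hj.symm)⟩
  invFun g := SimpleGraph.Coloring.mk (fun x => g.1 x.1 x.2) (by
    rintro ⟨u, i⟩ ⟨v, j⟩ (⟨rfl, hij⟩ | h)
    · exact fun h => hij ((g.1 u).injective h)
    · intro heq
      refine Finset.disjoint_left.mp (g.2 h)
        (Finset.mem_image_of_mem _ (Finset.mem_univ i)) ?_
      have heq' : (g.1 (u, i).1) i = (g.1 (v, j).1) j := heq
      rw [heq']
      exact Finset.mem_image_of_mem _ (Finset.mem_univ j))
  left_inv c := by
    apply DFunLike.ext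
    intro x
    rfl
  right_inv g := rfl

/-- The number of embeddings of `Fin b` into `Fin lam` with a prescribed image of size `b`. -/
lemma card_emb_fixed_image (s : Finset (Fin lam)) (hs : s.card = b) :
    Nat.card {e : Fin b ↪ Fin lam // Finset.image e Finset.univ = s} = Nat.factorial b := by
  have key : {e : Fin b ↪ Fin lam // Finset.image e Finset.univ = s} ≃ (Fin b ↪ ↥s) := by
    refine
      { toFun := fun e => ⟨fun i => ⟨e.1 i, by
          obtain ⟨e, he⟩ := e
          show e i ∈ s
          rw [← he]; exact mem_image_of_mem _ (mem_univ i)⟩,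
          fun i j h => e.1.injective (congrArg Subtype.val h)⟩
        invFun := fun e' =>
          ⟨⟨fun i => (e' i).1, fun i j h => e'.injective (Subtype.ext h)⟩, ?_⟩
        left_inv := fun e => by
          apply Subtype.ext
          apply DFunLike.ext
          intro i
          rfl
        right_inv := fun e' => by
          apply DFunLike.ext
          intro i
          rfl }
    have hsurj : Function.Surjective e' := by
      have : Function.Bijective e' := by
        rw [Fintype.bijective_iff_injective_and_card]
        refine ⟨e'.injective, ?_⟩
        simp [Fintype.card_coe, hs]
      exact this.2
    ext x
    simp only [Finset.mem_image, Finset.mem_univ, true_and, Function.Embedding.coeFn_mk]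
    constructor
    · rintro ⟨i, rfl⟩
      exact (e' i).2
    · intro hx
      obtain ⟨i, hi⟩ := hsurj ⟨x, hx⟩
      exact ⟨i, congrArg Subtype.val hi⟩
  rw [Nat.card_congr key, Nat.card_eq_fintype_card, Fintype.card_embedding_eq,
    Fintype.card_coe, hs, Fintype.card_fin, Nat.descFactorial_self]

lemma nat_card_sigma_const {ι : Type*} [Finite ι] (α : ι → Type*) [∀ i, Finite (α i)]
    (k : ℕ) (h : ∀ i, Nat.card (α i) = k) :
    Nat.card (Σ i, α i) = Nat.card ι * k := by
  haveI := Fintype.ofFinite ι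
  haveI := fun i => Fintype.ofFinite (α i)
  simp only [Nat.card_eq_fintype_card, Fintype.card_sigma]
  have : ∀ i, Fintype.card (α i) = k := fun i => by
    rw [← Nat.card_eq_fintype_card]; exact h i
  simp [this, Finset.sum_const, Finset.card_univ, mul_comm]

end Aux

theorem nBFold_eq_nProper_blowup_div {V : Type*} [Fintype V] (G : SimpleGraph V) (b lam : ℕ)
    (hb : 0 < b) (hlam : 0 < lam) :
    nBFold G b lam = nProper (blowup G b) lam / (Nat.factorial b) ^ (Fintype.card V) := by
  classical
  -- projection from embedding families to b-fold colorings
  let π : EmbFam G b lam → {f : V → Finset (Fin lam) // IsBFoldColoring G b lam f} :=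
    fun g => ⟨fun v => Finset.image (g.1 v) Finset.univ, by
      constructor
      · intro v
        rw [Finset.card_image_of_injective _ (g.1 v).injective, Finset.card_univ,
          Fintype.card_fin]
      · intro u v huv
        exact g.2 huv⟩
  have key : nProper (blowup G b) lam
      = nBFold G b lam * (Nat.factorial b) ^ (Fintype.card V) := by
    rw [nProper, Nat.card_congr (colEquiv G b lam),
      Nat.card_congr (Equiv.sigmaFiberEquiv π).symm]
    rw [nat_card_sigma_const _ ((Nat.factorial b) ^ (Fintype.card V))]
    · rfl
    · intro f
      -- fiber over f ≃ Π v, embeddings with image f.1 v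
      have e2 : {g : EmbFam G b lam // π g = f} ≃
          ∀ v, {e : Fin b ↪ Fin lam // Finset.image e Finset.univ = f.1 v} := by
        refine
          { toFun := fun g v => ⟨g.1.1 v, congrFun (congrArg Subtype.val g.2) v⟩
            invFun := fun h => ⟨⟨fun v => (h v).1, fun u v huv => by
              rw [(h u).2, (h v).2]; exact f.2.2 huv⟩,
              Subtype.ext (funext fun v => (h v).2)⟩
            left_inv := fun g => by
              apply Subtype.ext; apply Subtype.ext; rfl
            right_inv := fun h => by
              funext v; apply Subtype.ext; rfl }
      rw [Nat.card_congr e2, Nat.card_pi]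
      have hcard : ∀ v, Nat.card {e : Fin b ↪ Fin lam // Finset.image e Finset.univ = f.1 v}
          = Nat.factorial b := fun v => card_emb_fixed_image b lam (f.1 v) (f.2.1 v)
      simp only [hcard]
      rw [Finset.prod_const, Finset.card_univ]
  rw [key, Nat.mul_div_cancel]
  exact pow_pos (Nat.factorial_pos b) _
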